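/- With T_k the odious numbers and T̄_k the evil numbers in {0,…,2^k−1}, for k ≥ 1 one has ∑_{x∈T_k} x^k − ∑_{x∈T̄_k} x^k = (−1)^{k+1} · k! · 2^{k(k−1)/2}. -/

import Mathlib

/-- The odious numbers in `{0, …, 2^k - 1}`: those with an odd binary digit sum. -/
def odious (k : ℕ) : Finset ℕ :=
  (Finset.range (2 ^ k)).filter (fun x => Odd ((Nat.digits 2 x).sum))

/-- The evil numbers in `{0, …, 2^k - 1}`: those with an even binary digit sum. -/
def evil (k : ℕ) : Finset ℕ :=
  (Finset.range (2 ^ k)).filter (fun x => Even ((Nat.digits 2 x).sum))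

/-- Signed power sum: `∑_{x < 2^k} (-1)^{s₂(x)} x^n`. -/
noncomputable def sgnSum (k n : ℕ) : ℤ :=
  ∑ x ∈ Finset.range (2 ^ k), (-1) ^ ((Nat.digits 2 x).sum) * (x : ℤ) ^ n

lemma digitSum_rec (n : ℕ) : (Nat.digits 2 n).sum = n % 2 + (Nat.digits 2 (n / 2)).sum := by
  rcases Nat.eq_zero_or_pos n with h | h
  · simp [h]
  · rw [Nat.digits_def' (by norm_num : 1 < 2) h]; simp

lemma digitSum_add_pow (k : ℕ) : ∀ x < 2 ^ k,
    (Nat.digits 2 (x + 2 ^ k)).sum = (Nat.digits 2 x).sum + 1 := by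
  induction k with
  | zero => intro x hx; interval_cases x; simp
  | succ k ih =>
    intro x hx
    have e : 2 ^ (k+1) = 2 * 2 ^ k := by rw [pow_succ]; ring
    rw [digitSum_rec (x + 2 ^ (k+1)), digitSum_rec x]
    have h1 : (x + 2 ^ (k+1)) % 2 = x % 2 := by omega
    have h2 : (x + 2 ^ (k+1)) / 2 = x / 2 + 2 ^ k := by omega
    have h3 : x / 2 < 2 ^ k := by omega
    rw [h1, h2, ih _ h3]; ring

lemma sum_range_two_pow_succ (k : ℕ) (f : ℕ → ℤ) :
    ∑ x ∈ Finset.range (2 ^ (k+1)), f x =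
      ∑ x ∈ Finset.range (2 ^ k), f x + ∑ x ∈ Finset.range (2 ^ k), f (x + 2 ^ k) := by
  have e : 2 ^ (k+1) = 2 ^ k + 2 ^ k := by rw [pow_succ]; ring
  rw [e, Finset.sum_range_add]
  simp [Nat.add_comm]

lemma sgnSum_succ (k n : ℕ) :
    sgnSum (k+1) n = -∑ j ∈ Finset.range n,
      (n.choose j : ℤ) * ((2:ℤ) ^ k) ^ (n - j) * sgnSum k j := by
  have hfold : ∀ m n, sgnSum m n
      = ∑ x ∈ Finset.range (2 ^ m), (-1:ℤ) ^ ((Nat.digits 2 x).sum) * (x : ℤ) ^ n :=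
    fun _ _ => rfl
  rw [hfold (k+1) n, sum_range_two_pow_succ]
  have key : ∀ x ∈ Finset.range (2 ^ k),
      (-1:ℤ) ^ ((Nat.digits 2 (x + 2 ^ k)).sum) * ((x + 2 ^ k : ℕ) : ℤ) ^ n
        = -((-1) ^ ((Nat.digits 2 x).sum) * ((x : ℤ) + 2 ^ k) ^ n) := by
    intro x hx
    rw [digitSum_add_pow k x (Finset.mem_range.mp hx), pow_succ]
    push_cast
    ring
  rw [Finset.sum_congr rfl key, Finset.sum_neg_distrib]
  have h2 : ∑ x ∈ Finset.range (2 ^ k), (-1:ℤ) ^ ((Nat.digits 2 x).sum) * ((x:ℤ) + 2 ^ k) ^ n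
      = ∑ j ∈ Finset.range (n+1),
        (n.choose j : ℤ) * ((2:ℤ) ^ k) ^ (n - j) * sgnSum k j := by
    have expand : ∀ x : ℕ, ((x:ℤ) + 2 ^ k) ^ n
        = ∑ j ∈ Finset.range (n+1), (x:ℤ) ^ j * ((2:ℤ) ^ k) ^ (n - j) * n.choose j :=
      fun x => add_pow _ _ _
    simp_rw [expand, Finset.mul_sum]
    rw [Finset.sum_comm]
    refine Finset.sum_congr rfl fun j _ => ?_
    rw [hfold k j, Finset.mul_sum]
    refine Finset.sum_congr rfl fun x _ => ?_
    ring
  rw [h2, ← hfold k n, Finset.sum_range_succ]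
  simp only [Nat.choose_self, Nat.cast_one, Nat.sub_self, pow_zero, one_mul, mul_one]
  ring

lemma sgnSum_lt : ∀ k, ∀ n < k, sgnSum k n = 0 := by
  intro k
  induction k with
  | zero => intro n hn; omega
  | succ k ih =>
    intro n hn
    rw [sgnSum_succ]
    rw [Finset.sum_eq_zero fun j hj => by
      rw [ih j (by have := Finset.mem_range.mp hj; omega)]; ring]
    ring

lemma sgnSum_eq (k : ℕ) :
    sgnSum k k = (-1) ^ k * (k.factorial : ℤ) * 2 ^ (k * (k - 1) / 2) := by
  induction k with
  | zero => simp [sgnSum]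
  | succ k ih =>
    rw [sgnSum_succ, Finset.sum_range_succ,
      Finset.sum_eq_zero fun j hj => by
        rw [sgnSum_lt k j (Finset.mem_range.mp hj)]; ring,
      zero_add, ih]
    have hexp : (k+1) * ((k+1) - 1) / 2 = k * (k - 1) / 2 + k := by
      have h1 : k * (k - 1) + 2 * k = (k + 1) * ((k+1) - 1) := by
        cases k with
        | zero => simp
        | succ m => simp [Nat.succ_sub_one]; ring
      have h2 : Even (k * (k - 1)) := by
        cases k with
        | zero => simp
        | succ m => simpa [Nat.succ_sub_one, mul_comm] using Nat.even_mul_succ_self m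
      obtain ⟨t, ht⟩ := h2
      omega
    rw [hexp, pow_add, Nat.choose_succ_self_right, Nat.factorial_succ,
      show k + 1 - k = 1 from by omega, pow_one]
    push_cast
    ring

/-- `S_k(T_k) - S_k(T̄_k) = (-1)^(k+1) k! 2^(k(k-1)/2)` for `k ≥ 1`. -/
theorem powerSum_diff_eq (k : ℕ) (hk : 1 ≤ k) :
    (∑ x ∈ odious k, (x : ℤ) ^ k) - ∑ x ∈ evil k, (x : ℤ) ^ k =
      (-1) ^ (k + 1) * (k.factorial : ℤ) * 2 ^ (k * (k - 1) / 2) := by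
  have hsplit : sgnSum k k = (∑ x ∈ evil k, (x : ℤ) ^ k) - ∑ x ∈ odious k, (x : ℤ) ^ k := by
    unfold sgnSum evil odious
    rw [← Finset.sum_filter_add_sum_filter_not (Finset.range (2 ^ k))
      (fun x => Odd ((Nat.digits 2 x).sum))]
    have h1 : ∑ x ∈ (Finset.range (2 ^ k)).filter (fun x => Odd ((Nat.digits 2 x).sum)),
        (-1:ℤ) ^ ((Nat.digits 2 x).sum) * (x : ℤ) ^ k
        = -∑ x ∈ (Finset.range (2 ^ k)).filter (fun x => Odd ((Nat.digits 2 x).sum)),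
          (x : ℤ) ^ k := by
      rw [← Finset.sum_neg_distrib]
      refine Finset.sum_congr rfl fun x hx => ?_
      rw [Odd.neg_one_pow (Finset.mem_filter.mp hx).2]
      ring
    have h2 : ∑ x ∈ (Finset.range (2 ^ k)).filter (fun x => ¬ Odd ((Nat.digits 2 x).sum)),
        (-1:ℤ) ^ ((Nat.digits 2 x).sum) * (x : ℤ) ^ k
        = ∑ x ∈ (Finset.range (2 ^ k)).filter (fun x => Even ((Nat.digits 2 x).sum)),
          (x : ℤ) ^ k := by
      simp_rw [Nat.not_odd_iff_even]
      refine Finset.sum_congr rfl fun x hx => ?_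
      rw [Even.neg_one_pow (Finset.mem_filter.mp hx).2]
      ring
    rw [h1, h2]
    ring
  have heq := sgnSum_eq k
  have hsign : ((-1:ℤ)) ^ (k + 1) = -(-1) ^ k := by rw [pow_succ]; ring
  rw [hsign]
  linarith [hsplit, heq]
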